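/- Let c > 0, M > 0 and 0 ≤ S₀ < c²/2 be real, and let p : ℂ → ℂ be analytic on the open strip S_M = {z ∈ ℂ : |Im z| < M} with |p(z)| ≤ S₀ for all z ∈ S_M. Then the function z ↦ c − √(c² − 2p(z)) is analytic on S_M, and there exists a constant C > 0, depending only on c and S₀, such that for every y with |y| < M, ∫_ℝ |c − √(c² − 2p(x+iy))|² dx ≤ C² ∫_ℝ |p(x+iy)|² dx. -/

import Mathlib

open MeasureTheory Complex

lemma re_cpow_half_nonneg (w : ℂ) (hw : w ≠ 0) : 0 ≤ (w ^ ((1:ℂ)/2)).re := by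
  rw [Complex.cpow_def_of_ne_zero hw, Complex.exp_re]
  apply mul_nonneg (Real.exp_pos _).le
  apply Real.cos_nonneg_of_mem_Icc
  constructor
  · simp [Complex.log_im]
    nlinarith [Complex.neg_pi_lt_arg w, Real.pi_pos]
  · simp [Complex.log_im]
    nlinarith [Complex.arg_le_pi w, Real.pi_pos]

lemma re_pos_aux (c S₀ : ℝ) (hc : 0 < c) (hS : S₀ < c ^ 2 / 2) (q : ℂ)
    (hq : ‖q‖ ≤ S₀) : 0 < ((c:ℂ)^2 - 2*q).re := by
  have h := Complex.abs_re_le_norm q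
  have hre : ((c:ℂ)^2 - 2*q).re = c^2 - 2*q.re := by
    simp [Complex.sub_re, Complex.mul_re, ← Complex.ofReal_pow]
  rw [hre]
  cases' abs_le.1 h with h1 h2
  nlinarith

lemma key_bound (c S₀ : ℝ) (hc : 0 < c) (hS : S₀ < c ^ 2 / 2) (q : ℂ)
    (hq : ‖q‖ ≤ S₀) :
    ‖(c:ℂ) - ((c:ℂ)^2 - 2*q) ^ ((1:ℂ)/2)‖ ≤ (2/c) * ‖q‖ := by
  set w : ℂ := (c:ℂ)^2 - 2*q with hwdef
  have hrew : 0 < w.re := re_pos_aux c S₀ hc hS q hq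
  have hw0 : w ≠ 0 := fun h => by simp [h] at hrew
  set s : ℂ := w ^ ((1:ℂ)/2) with hsdef
  have hss : s * s = w := by
    rw [hsdef, ← Complex.cpow_add _ _ hw0]
    norm_num
  have hres : 0 ≤ s.re := re_cpow_half_nonneg w hw0
  have hcs : (c:ℝ) ≤ ‖(c:ℂ) + s‖ := by
    calc (c:ℝ) ≤ ((c:ℂ) + s).re := by simp; linarith
    _ ≤ ‖(c:ℂ) + s‖ := Complex.re_le_norm _
  have hcspos : (0:ℝ) < ‖(c:ℂ) + s‖ := lt_of_lt_of_le hc hcs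
  have hid : ((c:ℂ) - s) * ((c:ℂ) + s) = 2 * q := by
    calc ((c:ℂ) - s) * ((c:ℂ) + s) = (c:ℂ)^2 - s*s := by ring
    _ = (c:ℂ)^2 - w := by rw [hss]
    _ = 2*q := by rw [hwdef]; ring
  have hmul : ‖(c:ℂ) - s‖ * ‖(c:ℂ) + s‖ = 2 * ‖q‖ := by
    rw [← norm_mul, hid, norm_mul]; simp
  have habs : ‖(c:ℂ) - s‖ = 2 * ‖q‖ / ‖(c:ℂ) + s‖ :=
    (eq_div_iff hcspos.ne').2 hmul
  rw [habs, div_le_iff₀ hcspos]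
  have hq0 : 0 ≤ ‖q‖ := norm_nonneg q
  calc 2 * ‖q‖ = (2/c) * ‖q‖ * c := by field_simp
  _ ≤ 2/c * ‖q‖ * ‖(c:ℂ)+s‖ := by
      apply mul_le_mul_of_nonneg_left hcs
      positivity

/-- If `p` is analytic and bounded by `S₀ < c²/2` on a horizontal strip, then
`c - √(c² - 2p)` is analytic on the strip, and its squared modulus integrated along any
horizontal line in the strip is controlled by that of `p`, with a constant depending
only on `c` and `S₀`. -/
theorem sqrt_composition_analytic_and_L2_bound
    (c S₀ : ℝ) (hc : 0 < c) (hS₀ : 0 ≤ S₀) (hS : S₀ < c ^ 2 / 2) :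
    ∃ C : ℝ, 0 < C ∧
      ∀ (M : ℝ), 0 < M → ∀ p : ℂ → ℂ,
        DifferentiableOn ℂ p {z : ℂ | |z.im| < M} →
        (∀ z ∈ {z : ℂ | |z.im| < M}, ‖p z‖ ≤ S₀) →
        DifferentiableOn ℂ
            (fun z : ℂ => (c : ℂ) - ((c : ℂ) ^ 2 - 2 * p z) ^ ((1 : ℂ) / 2))
            {z : ℂ | |z.im| < M} ∧
          ∀ y : ℝ, |y| < M →
            (∫⁻ x : ℝ, ENNReal.ofReal
                (‖(c : ℂ) - ((c : ℂ) ^ 2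
                  - 2 * p (x + y * Complex.I)) ^ ((1 : ℂ) / 2)‖ ^ 2))
              ≤ ENNReal.ofReal (C ^ 2) *
                ∫⁻ x : ℝ, ENNReal.ofReal (‖p (x + y * Complex.I)‖ ^ 2) := by
  refine ⟨2/c, by positivity, fun M hM p hp hbd => ?_⟩
  have hopen : IsOpen {z : ℂ | |z.im| < M} := by
    have : {z : ℂ | |z.im| < M} = (fun z : ℂ => |z.im|) ⁻¹' Set.Iio M := rfl
    rw [this]
    exact isOpen_Iio.preimage (_root_.continuous_abs.comp Complex.continuous_im)
  constructor
  · intro z hz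
    have hpz : DifferentiableAt ℂ p z := hp.differentiableAt (hopen.mem_nhds hz)
    have hw : DifferentiableAt ℂ (fun z => (c:ℂ)^2 - 2*p z) z :=
      (differentiableAt_const _).sub (hpz.const_mul 2)
    have hslit : ((c:ℂ)^2 - 2*p z) ∈ Complex.slitPlane :=
      Or.inl (re_pos_aux c S₀ hc hS (p z) (hbd z hz))
    exact ((differentiableAt_const _).sub
      (hw.cpow (differentiableAt_const _) hslit)).differentiableWithinAt
  · intro y hy
    have hpt : ∀ x : ℝ,
        ENNReal.ofReal (‖(c:ℂ) - ((c:ℂ)^2 - 2*p (x + y*Complex.I)) ^ ((1:ℂ)/2)‖ ^ 2)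
        ≤ ENNReal.ofReal ((2/c) ^ 2) * ENNReal.ofReal (‖p (x + y*Complex.I)‖ ^ 2) := by
      intro x
      have hmem : ((x:ℂ) + y*Complex.I) ∈ {z : ℂ | |z.im| < M} := by
        simp [Complex.add_im, Complex.mul_im]
        exact hy
      have hk := key_bound c S₀ hc hS (p (x + y*Complex.I)) (hbd _ hmem)
      have hsq : ‖(c:ℂ) - ((c:ℂ)^2 - 2*p (x + y*Complex.I)) ^ ((1:ℂ)/2)‖ ^ 2
          ≤ (2/c) ^ 2 * ‖p (x + y*Complex.I)‖ ^ 2 := by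
        have := pow_le_pow_left₀ (norm_nonneg _) hk 2
        rwa [mul_pow] at this
      rw [← ENNReal.ofReal_mul (by positivity)]
      exact ENNReal.ofReal_le_ofReal hsq
    calc (∫⁻ x : ℝ, ENNReal.ofReal
            (‖(c:ℂ) - ((c:ℂ)^2 - 2*p (x + y*Complex.I)) ^ ((1:ℂ)/2)‖ ^ 2))
        ≤ ∫⁻ x : ℝ, ENNReal.ofReal ((2/c) ^ 2) *
            ENNReal.ofReal (‖p (x + y*Complex.I)‖ ^ 2) := lintegral_mono hpt
      _ = ENNReal.ofReal ((2/c) ^ 2) *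
            ∫⁻ x : ℝ, ENNReal.ofReal (‖p (x + y*Complex.I)‖ ^ 2) :=
          lintegral_const_mul' _ _ ENNReal.ofReal_ne_top
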